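/- arXiv:0709.4204 — 5 statements merged into one kernel-verified Lean document; each statement's English description precedes it below -/
import Mathlib

section
/- There exists a unique H₀ ∈ (0, ∞) such that the derivative of the function A(H) = 8π·(1/(4H²+1) + (4H²/(4H²+1)^{3/2})·artanh(1/√(4H²+1))) vanishes at H₀. -/
open Real Set

/-- The inverse hyperbolic tangent. -/
noncomputable def artanh (x : ℝ) : ℝ := (1 / 2) * Real.log ((1 + x) / (1 - x))

/-- Pedrosa's formula for the area of the rotational CMC sphere of mean
curvature `H` in `S² × ℝ`. -/
noncomputable def pedrosaArea (H : ℝ) : ℝ :=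
  8 * Real.pi * (1 / (4 * H ^ 2 + 1) +
    (4 * H ^ 2 / (4 * H ^ 2 + 1) ^ ((3 : ℝ) / 2)) *
      _root_.artanh (1 / Real.sqrt (4 * H ^ 2 + 1)))

lemma hasDerivAt_artanh {x : ℝ} (h1 : -1 < x) (h2 : x < 1) :
    HasDerivAt _root_.artanh (1 / (1 - x ^ 2)) x := by
  have hp : (0:ℝ) < 1 + x := by linarith
  have hm : (0:ℝ) < 1 - x := by linarith
  have h : HasDerivAt (fun y : ℝ => (1 / 2) * (Real.log (1 + y) - Real.log (1 - y)))
      ((1/2) * ((1 + x)⁻¹ - (-1) * (1 - x)⁻¹)) x := by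
    have ha : HasDerivAt (fun y : ℝ => Real.log (1 + y)) ((1 + x)⁻¹) x := by
      simpa using (HasDerivAt.log ((hasDerivAt_id x).const_add 1) hp.ne')
    have hb : HasDerivAt (fun y : ℝ => Real.log (1 - y)) ((-1 : ℝ) * (1 - x)⁻¹) x := by
      simpa [div_eq_mul_inv] using (HasDerivAt.log ((hasDerivAt_id x).const_sub 1) hm.ne')
    exact (ha.sub hb).const_mul _
  have heq : _root_.artanh =ᶠ[nhds x] fun y : ℝ => (1 / 2) * (Real.log (1 + y) - Real.log (1 - y)) := by
    filter_upwards [Ioo_mem_nhds h1 h2] with y hy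
    have : Real.log ((1 + y) / (1 - y)) = Real.log (1 + y) - Real.log (1 - y) :=
      Real.log_div (by nlinarith [hy.1] : (0:ℝ) < 1 + y).ne' (by nlinarith [hy.2] : (0:ℝ) < 1 - y).ne'
    simp [_root_.artanh, this]
  have hd := h.congr_of_eventuallyEq heq
  refine hd.congr_deriv (Eq.symm ?_)
  have hx2 : (1 - x ^ 2) ≠ 0 := by nlinarith
  have hc : (1 - x ^ 2) * (1 - x ^ 2)⁻¹ = 1 := mul_inv_cancel₀ hx2
  field_simp
  nlinarith [hc]



noncomputable def pedF (t : ℝ) : ℝ := 8 * Real.pi * (t ^ 2 + (t - t ^ 3) * _root_.artanh t)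

noncomputable def pedG (t : ℝ) : ℝ := 3 * t + (1 - 3 * t ^ 2) * _root_.artanh t

noncomputable def tmap (H : ℝ) : ℝ := (Real.sqrt (4 * H ^ 2 + 1))⁻¹

lemma hasDerivAt_pedF {x : ℝ} (h1 : -1 < x) (h2 : x < 1) :
    HasDerivAt pedF (8 * Real.pi * pedG x) x := by
  have hx2 : (1 - x ^ 2) ≠ 0 := by nlinarith
  have h : HasDerivAt (fun t : ℝ => t ^ 2 + (t - t ^ 3) * _root_.artanh t)
      (2 * x + ((1 - 3 * x ^ 2) * _root_.artanh x + (x - x ^ 3) * (1 / (1 - x ^ 2)))) x := by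
    have hsq : HasDerivAt (fun t : ℝ => t ^ 2) (2 * x) x := by
      simpa using hasDerivAt_pow 2 x
    have hcub : HasDerivAt (fun t : ℝ => t - t ^ 3) (1 - 3 * x ^ 2) x := by
      have := (hasDerivAt_id x).sub (hasDerivAt_pow 3 x)
      simp only [Nat.cast_ofNat, Nat.add_one_sub_one, mul_one] at this
      exact this
    exact hsq.add (hcub.mul (hasDerivAt_artanh h1 h2))
  have := h.const_mul (8 * Real.pi)
  have hfun : pedF = fun t : ℝ => 8 * Real.pi * (t ^ 2 + (t - t ^ 3) * _root_.artanh t) := rfl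
  rw [hfun]
  refine this.congr_deriv (Eq.symm ?_)
  have hfrac : (x - x ^ 3) * (1 / (1 - x ^ 2)) = x := by
    rw [mul_one_div, div_eq_iff hx2]; ring
  rw [pedG]
  rw [hfrac]
  ring

lemma hasDerivAt_tmap {H : ℝ} (hH : 0 < H) :
    HasDerivAt tmap (-((4 * H / Real.sqrt (4 * H ^ 2 + 1)) / (Real.sqrt (4 * H ^ 2 + 1)) ^ 2)) H := by
  have hu : (0:ℝ) < 4 * H ^ 2 + 1 := by positivity
  have hs : (0:ℝ) < Real.sqrt (4 * H ^ 2 + 1) := Real.sqrt_pos.mpr hu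
  have hin : HasDerivAt (fun H : ℝ => 4 * H ^ 2 + 1) (8 * H) H := by
    have := ((hasDerivAt_pow 2 H).const_mul 4).add_const 1
    refine this.congr_deriv (Eq.symm ?_)
    push_cast
    ring
  have hsq : HasDerivAt (fun H : ℝ => Real.sqrt (4 * H ^ 2 + 1)) (8 * H / (2 * Real.sqrt (4 * H ^ 2 + 1))) H :=
    hin.sqrt hu.ne'
  have := hsq.inv hs.ne'
  refine this.congr_deriv (Eq.symm ?_)
  rw [div_div]
  field_simp
  ring

lemma tmap_mem {H : ℝ} (hH : 0 < H) : tmap H ∈ Ioo (0:ℝ) 1 := by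
  have hu : (1:ℝ) < 4 * H ^ 2 + 1 := by nlinarith
  have hs : (1:ℝ) < Real.sqrt (4 * H ^ 2 + 1) := by
    rw [show (1:ℝ) = Real.sqrt 1 by simp]
    exact Real.sqrt_lt_sqrt (by norm_num) (by simpa using hu)
  constructor
  · exact inv_pos.mpr (lt_trans one_pos hs)
  · exact inv_lt_one_of_one_lt₀ hs

lemma pedrosaArea_eq (H : ℝ) : pedrosaArea H = pedF (tmap H) := by
  have hu : (0:ℝ) < 4 * H ^ 2 + 1 := by positivity
  have hs : (0:ℝ) < Real.sqrt (4 * H ^ 2 + 1) := Real.sqrt_pos.mpr hu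
  set s := Real.sqrt (4 * H ^ 2 + 1) with hsdef
  have hs2 : s ^ 2 = 4 * H ^ 2 + 1 := Real.sq_sqrt hu.le
  have hr : (4 * H ^ 2 + 1) ^ ((3:ℝ)/2) = (4 * H ^ 2 + 1) * s := by
    rw [show ((3:ℝ)/2) = 1 + 1/2 by norm_num, Real.rpow_add hu, Real.rpow_one,
      hsdef, Real.sqrt_eq_rpow]
  rw [pedrosaArea, pedF, tmap, hr, one_div, ← hsdef]
  have h1 : (s⁻¹) ^ 2 = 1 / (4 * H ^ 2 + 1) := by
    rw [inv_pow, hs2, one_div]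
  have h2 : s⁻¹ - (s⁻¹) ^ 3 = 4 * H ^ 2 / ((4 * H ^ 2 + 1) * s) := by
    field_simp
    nlinarith [hs2]
  rw [h1, h2]
  simp [one_div]

lemma deriv_pedrosaArea_zero_iff {H : ℝ} (hH : 0 < H) :
    deriv pedrosaArea H = 0 ↔ pedG (tmap H) = 0 := by
  obtain ⟨ht0, ht1⟩ := tmap_mem hH
  have hcomp : HasDerivAt pedrosaArea
      ((8 * Real.pi * pedG (tmap H)) *
        (-((4 * H / Real.sqrt (4 * H ^ 2 + 1)) / (Real.sqrt (4 * H ^ 2 + 1)) ^ 2))) H := by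
    have := (hasDerivAt_pedF (by linarith) ht1).comp H (hasDerivAt_tmap hH)
    have hfe : pedrosaArea = pedF ∘ tmap := funext pedrosaArea_eq
    rw [hfe]
    exact this
  rw [hcomp.deriv]
  have hs : (0:ℝ) < Real.sqrt (4 * H ^ 2 + 1) := Real.sqrt_pos.mpr (by positivity)
  have hd : (-((4 * H / Real.sqrt (4 * H ^ 2 + 1)) / (Real.sqrt (4 * H ^ 2 + 1)) ^ 2)) ≠ 0 := by
    have : (0:ℝ) < (4 * H / Real.sqrt (4 * H ^ 2 + 1)) / (Real.sqrt (4 * H ^ 2 + 1)) ^ 2 := by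
      positivity
    linarith
  rw [mul_eq_zero]
  constructor
  · rintro (h | h)
    · rcases mul_eq_zero.mp h with h' | h'
      · exact absurd h' (by positivity)
      · exact h'
    · exact absurd h hd
  · intro h
    exact Or.inl (by rw [h, mul_zero])

noncomputable def pedPhi (t : ℝ) : ℝ := _root_.artanh t - 3 * t / (3 * t ^ 2 - 1)

lemma artanh_pos {t : ℝ} (h0 : 0 < t) (h1 : t < 1) : 0 < _root_.artanh t := by
  have h : (1:ℝ) < (1 + t) / (1 - t) := by
    rw [lt_div_iff₀ (by linarith)]
    linarith
  have := Real.log_pos h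
  rw [_root_.artanh]
  linarith

lemma pedG_pos {t : ℝ} (h0 : 0 < t) (h1 : t < 1) (h : 3 * t ^ 2 ≤ 1) : 0 < pedG t := by
  have ha := artanh_pos h0 h1
  rw [pedG]
  nlinarith

lemma pedG_eq_phi {t : ℝ} (h : 3 * t ^ 2 - 1 ≠ 0) :
    pedG t = -(3 * t ^ 2 - 1) * pedPhi t := by
  rw [pedG, pedPhi]
  field_simp
  ring

lemma sqrt3_lt_iff {t : ℝ} (h0 : 0 < t) : (Real.sqrt 3)⁻¹ < t ↔ 1 < 3 * t ^ 2 := by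
  have h3 : (0:ℝ) < Real.sqrt 3 := Real.sqrt_pos.mpr (by norm_num)
  have hsq : Real.sqrt 3 ^ 2 = 3 := Real.sq_sqrt (by norm_num)
  have hinv : Real.sqrt 3 * (Real.sqrt 3)⁻¹ = 1 := mul_inv_cancel₀ h3.ne'
  constructor
  · intro h
    nlinarith [mul_lt_mul_of_pos_left h h3, sq_nonneg (Real.sqrt 3 * t - 1)]
  · intro h
    by_contra hc
    push_neg at hc
    nlinarith [mul_le_mul_of_nonneg_left hc h3.le, mul_pos h3 h0]

lemma hasDerivAt_pedPhi {t : ℝ} (h1 : -1 < t) (h2 : t < 1) (h3 : 3 * t ^ 2 - 1 ≠ 0) :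
    HasDerivAt pedPhi (1 / (1 - t ^ 2) + (9 * t ^ 2 + 3) / (3 * t ^ 2 - 1) ^ 2) t := by
  have hq : HasDerivAt (fun t : ℝ => 3 * t / (3 * t ^ 2 - 1))
      ((3 * (3 * t ^ 2 - 1) - 3 * t * (6 * t)) / (3 * t ^ 2 - 1) ^ 2) t := by
    have hn : HasDerivAt (fun t : ℝ => 3 * t) 3 t := by
      simpa using (hasDerivAt_id t).const_mul 3
    have hd : HasDerivAt (fun t : ℝ => 3 * t ^ 2 - 1) (6 * t) t := by
      have := ((hasDerivAt_pow 2 t).const_mul 3).sub_const 1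
      refine this.congr_deriv (Eq.symm ?_)
      push_cast
      ring
    exact hn.div hd h3
  have := (hasDerivAt_artanh h1 h2).sub hq
  refine this.congr_deriv (Eq.symm ?_)
  have hne : ((3 * t ^ 2 - 1) ^ 2) ≠ 0 := pow_ne_zero 2 h3
  have h12 : (1 - t ^ 2) ≠ 0 := by nlinarith
  field_simp
  ring

noncomputable def sqrt3inv : ℝ := (Real.sqrt 3)⁻¹

lemma pedPhi_strictMonoOn : StrictMonoOn pedPhi (Ioo sqrt3inv 1) := by
  have h3 : (0:ℝ) < Real.sqrt 3 := Real.sqrt_pos.mpr (by norm_num)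
  have ha : (0:ℝ) < sqrt3inv := inv_pos.mpr h3
  have key : ∀ x ∈ Ioo sqrt3inv 1, HasDerivAt pedPhi
      (1 / (1 - x ^ 2) + (9 * x ^ 2 + 3) / (3 * x ^ 2 - 1) ^ 2) x := by
    intro x hx
    have hx0 : 0 < x := lt_trans ha hx.1
    have h1 : 1 < 3 * x ^ 2 := (sqrt3_lt_iff hx0).mp hx.1
    exact hasDerivAt_pedPhi (by linarith) hx.2 (by nlinarith)
  apply strictMonoOn_of_deriv_pos (convex_Ioo _ _)
  · intro x hx
    exact ((key x hx).differentiableAt.continuousAt).continuousWithinAt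
  · intro x hx
    rw [interior_Ioo] at hx
    have hx0 : 0 < x := lt_trans ha hx.1
    have h1 : 1 < 3 * x ^ 2 := (sqrt3_lt_iff hx0).mp hx.1
    rw [(key x hx).deriv]
    have : (0:ℝ) < 1 - x ^ 2 := by nlinarith [hx.2]
    positivity

lemma log_39_gt : (7:ℝ)/2 < Real.log 39 := by
  have h7 : Real.exp 7 = Real.exp 1 ^ (7:ℕ) := by
    rw [← Real.exp_nat_mul]; norm_num
  have hb : Real.exp 1 ^ (7:ℕ) < 2.7182818286 ^ (7:ℕ) :=
    pow_lt_pow_left₀ Real.exp_one_lt_d9 (Real.exp_pos 1).le (by norm_num)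
  have h1521 : (2.7182818286:ℝ) ^ (7:ℕ) < 1521 := by norm_num
  have hsq : Real.exp (7/2) ^ (2:ℕ) = Real.exp 7 := by
    rw [← Real.exp_nat_mul]; norm_num
  have hlt : Real.exp (7/2) < 39 := by
    apply lt_of_pow_lt_pow_left₀ 2 (by norm_num : (0:ℝ) ≤ 39)
    rw [hsq]
    calc Real.exp 7 = Real.exp 1 ^ (7:ℕ) := h7
      _ < 2.7182818286 ^ (7:ℕ) := hb
      _ < 1521 := h1521
      _ = 39 ^ 2 := by norm_num
  exact (Real.lt_log_iff_exp_lt (by norm_num)).mpr hlt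

lemma pedPhi_lower : pedPhi (3/5) < 0 := by
  have h4 : Real.log 4 < 3 := by
    have := Real.log_lt_sub_one_of_pos (by norm_num : (0:ℝ) < 4) (by norm_num)
    linarith
  have hval : _root_.artanh (3/5) = (1/2) * Real.log 4 := by
    rw [_root_.artanh]; norm_num
  rw [pedPhi, hval]
  norm_num
  linarith

lemma pedPhi_upper : 0 < pedPhi (19/20) := by
  have hval : _root_.artanh (19/20) = (1/2) * Real.log 39 := by
    rw [_root_.artanh]; norm_num
  rw [pedPhi, hval]
  have := log_39_gt
  norm_num
  linarith

lemma pedPhi_contOn : ContinuousOn pedPhi (Icc (3/5 : ℝ) (19/20)) := by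
  intro x hx
  have h1 : (3:ℝ)/5 ≤ x := hx.1
  have h2 : x ≤ 19/20 := hx.2
  exact ((hasDerivAt_pedPhi (by linarith) (by linarith)
    (by nlinarith)).differentiableAt.continuousAt).continuousWithinAt

lemma exists_t0 : ∃ t₀ ∈ Ioo sqrt3inv 1, pedG t₀ = 0 := by
  have hsub : Icc (pedPhi (3/5)) (pedPhi (19/20)) ⊆ pedPhi '' Icc (3/5) (19/20) :=
    intermediate_value_Icc (by norm_num) pedPhi_contOn
  have h0 : (0:ℝ) ∈ Icc (pedPhi (3/5)) (pedPhi (19/20)) :=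
    ⟨pedPhi_lower.le, pedPhi_upper.le⟩
  obtain ⟨t₀, ht₀, hphi⟩ := hsub h0
  have hlo : sqrt3inv < t₀ := by
    have : sqrt3inv < 3/5 := (sqrt3_lt_iff (by norm_num)).mpr (by norm_num)
    linarith [ht₀.1]
  have hhi : t₀ < 1 := by linarith [ht₀.2]
  have h0t : 0 < t₀ := by linarith [ht₀.1]
  have h3t : 1 < 3 * t₀ ^ 2 := (sqrt3_lt_iff h0t).mp hlo
  refine ⟨t₀, ⟨hlo, hhi⟩, ?_⟩
  rw [pedG_eq_phi (by nlinarith), hphi, mul_zero]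

lemma pedG_zero_mem {t : ℝ} (ht : t ∈ Ioo (0:ℝ) 1) (hz : pedG t = 0) :
    t ∈ Ioo sqrt3inv 1 ∧ pedPhi t = 0 := by
  have h3 : 1 < 3 * t ^ 2 := by
    by_contra hc
    push_neg at hc
    exact absurd hz (pedG_pos ht.1 ht.2 hc).ne'
  have hmem : t ∈ Ioo sqrt3inv 1 := ⟨(sqrt3_lt_iff ht.1).mpr h3, ht.2⟩
  refine ⟨hmem, ?_⟩
  have := pedG_eq_phi (t := t) (by nlinarith)
  rw [hz] at this
  rcases mul_eq_zero.mp this.symm with h | h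
  · exact absurd h (by nlinarith : -(3 * t ^ 2 - 1) ≠ 0)
  · exact h

lemma pedG_zero_unique {t₁ t₂ : ℝ} (h₁ : t₁ ∈ Ioo (0:ℝ) 1) (h₂ : t₂ ∈ Ioo (0:ℝ) 1)
    (hz₁ : pedG t₁ = 0) (hz₂ : pedG t₂ = 0) : t₁ = t₂ := by
  obtain ⟨hm₁, hp₁⟩ := pedG_zero_mem h₁ hz₁
  obtain ⟨hm₂, hp₂⟩ := pedG_zero_mem h₂ hz₂
  exact pedPhi_strictMonoOn.injOn hm₁ hm₂ (by rw [hp₁, hp₂])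


lemma tmap_inj {H₁ H₂ : ℝ} (h₁ : 0 < H₁) (h₂ : 0 < H₂) (h : tmap H₁ = tmap H₂) :
    H₁ = H₂ := by
  have hu₁ : (0:ℝ) < 4 * H₁ ^ 2 + 1 := by positivity
  have hu₂ : (0:ℝ) < 4 * H₂ ^ 2 + 1 := by positivity
  have hs₁ : (0:ℝ) < Real.sqrt (4 * H₁ ^ 2 + 1) := Real.sqrt_pos.mpr hu₁
  have hs₂ : (0:ℝ) < Real.sqrt (4 * H₂ ^ 2 + 1) := Real.sqrt_pos.mpr hu₂
  rw [tmap, tmap, inv_inj] at h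
  have : (4 * H₁ ^ 2 + 1) = (4 * H₂ ^ 2 + 1) := by
    have e₁ := Real.sq_sqrt hu₁.le
    have e₂ := Real.sq_sqrt hu₂.le
    rw [← e₁, ← e₂, h]
  nlinarith

/-- There is a unique `H₀ ∈ (0, ∞)` at which the derivative of `A` vanishes. -/
theorem pedrosaArea_deriv_existsUnique_zero :
    ∃! H₀ : ℝ, H₀ ∈ Set.Ioi (0 : ℝ) ∧ deriv pedrosaArea H₀ = 0 := by
  obtain ⟨t₀, ht₀, hGz⟩ := exists_t0
  have h3 : (0:ℝ) < Real.sqrt 3 := Real.sqrt_pos.mpr (by norm_num)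
  have ht₀0 : 0 < t₀ := lt_trans (inv_pos.mpr h3) ht₀.1
  have ht₀1 : t₀ < 1 := ht₀.2
  have hx : (0:ℝ) < 1 / t₀ ^ 2 - 1 := by
    rw [lt_sub_iff_add_lt, zero_add, lt_div_iff₀ (by positivity)]
    nlinarith
  set H₀ := Real.sqrt (1 / t₀ ^ 2 - 1) / 2 with hH₀def
  have hH₀ : 0 < H₀ := by positivity
  have htm : tmap H₀ = t₀ := by
    have hsq : (Real.sqrt (1 / t₀ ^ 2 - 1)) ^ 2 = 1 / t₀ ^ 2 - 1 := Real.sq_sqrt hx.le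
    have hu : 4 * H₀ ^ 2 + 1 = 1 / t₀ ^ 2 := by
      rw [hH₀def]
      rw [div_pow, hsq]
      ring
    rw [tmap, hu]
    rw [show (1:ℝ) / t₀ ^ 2 = (1 / t₀) ^ 2 by rw [div_pow, one_pow]]
    rw [Real.sqrt_sq (by positivity)]
    rw [one_div, inv_inv]
  refine ⟨H₀, ⟨hH₀, ?_⟩, ?_⟩
  · rw [deriv_pedrosaArea_zero_iff hH₀, htm]
    exact hGz
  · rintro H ⟨hHpos, hHz⟩
    rw [mem_Ioi] at hHpos
    have hGz' : pedG (tmap H) = 0 := (deriv_pedrosaArea_zero_iff hHpos).mp hHz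
    have : tmap H = tmap H₀ := by
      rw [htm]
      exact pedG_zero_unique (tmap_mem hHpos) ⟨ht₀0, ht₀1⟩ hGz' hGz
    exact tmap_inj hHpos hH₀ this
end

section
/- Let H₀ ∈ (0, ∞) be the unique zero of the derivative of A(H) = 8π·(1/(4H²+1) + (4H²/(4H²+1)^{3/2})·artanh(1/√(4H²+1))) on (0, ∞). Then A is strictly monotone increasing on the interval (0, H₀] and strictly monotone decreasing on the interval [H₀, ∞). -/
open Real Set

lemma pedrosaArea_diff {x : ℝ} (hx : x ≠ 0) : DifferentiableAt ℝ pedrosaArea x := by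
  have hx2 : 0 < x ^ 2 := by positivity
  have h1 : (0:ℝ) < 4 * x ^ 2 + 1 := by positivity
  have h1' : (1:ℝ) < 4 * x ^ 2 + 1 := by nlinarith
  have hs1 : 1 < Real.sqrt (4 * x ^ 2 + 1) := by
    rw [Real.lt_sqrt (by norm_num)]
    nlinarith
  have hspos : 0 < Real.sqrt (4 * x ^ 2 + 1) := lt_trans one_pos hs1
  have hu : DifferentiableAt ℝ (fun y : ℝ => 4 * y ^ 2 + 1) x := by fun_prop
  have hsq : DifferentiableAt ℝ (fun y : ℝ => Real.sqrt (4 * y ^ 2 + 1)) x :=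
    hu.sqrt (ne_of_gt h1)
  have hv : DifferentiableAt ℝ (fun y : ℝ => 1 / Real.sqrt (4 * y ^ 2 + 1)) x :=
    (differentiableAt_const _).div hsq (ne_of_gt hspos)
  have hvlt : 1 / Real.sqrt (4 * x ^ 2 + 1) < 1 := by
    rw [div_lt_one hspos]; exact hs1
  have hvpos : 0 < 1 / Real.sqrt (4 * x ^ 2 + 1) := by positivity
  have hnum : DifferentiableAt ℝ (fun y : ℝ => 1 + 1 / Real.sqrt (4 * y ^ 2 + 1)) x :=
    (differentiableAt_const _).add hv
  have hden : DifferentiableAt ℝ (fun y : ℝ => 1 - 1 / Real.sqrt (4 * y ^ 2 + 1)) x :=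
    (differentiableAt_const _).sub hv
  have hdenne : (1 : ℝ) - 1 / Real.sqrt (4 * x ^ 2 + 1) ≠ 0 := by
    have : 0 < (1 : ℝ) - 1 / Real.sqrt (4 * x ^ 2 + 1) := by linarith
    exact ne_of_gt this
  have hargne :
      (1 + 1 / Real.sqrt (4 * x ^ 2 + 1)) / (1 - 1 / Real.sqrt (4 * x ^ 2 + 1)) ≠ 0 := by
    apply ne_of_gt
    apply div_pos (by linarith) (by linarith)
  have hlog : DifferentiableAt ℝ
      (fun y : ℝ => Real.log ((1 + 1 / Real.sqrt (4 * y ^ 2 + 1)) /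
        (1 - 1 / Real.sqrt (4 * y ^ 2 + 1)))) x :=
    (hnum.div hden hdenne).log hargne
  have hart : DifferentiableAt ℝ (fun y : ℝ => _root_.artanh (1 / Real.sqrt (4 * y ^ 2 + 1))) x := by
    simp only [_root_.artanh]
    exact hlog.const_mul _
  have hinv : DifferentiableAt ℝ (fun y : ℝ => 1 / (4 * y ^ 2 + 1)) x :=
    (differentiableAt_const _).div hu (ne_of_gt h1)
  have hrpow : DifferentiableAt ℝ (fun y : ℝ => (4 * y ^ 2 + 1) ^ ((3:ℝ)/2)) x :=
    hu.rpow_const (Or.inl (ne_of_gt h1))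
  have hrpos : (0:ℝ) < (4 * x ^ 2 + 1) ^ ((3:ℝ)/2) := Real.rpow_pos_of_pos h1 _
  have hquot : DifferentiableAt ℝ
      (fun y : ℝ => 4 * y ^ 2 / (4 * y ^ 2 + 1) ^ ((3:ℝ)/2)) x := by
    exact (by fun_prop : DifferentiableAt ℝ (fun y : ℝ => 4 * y ^ 2) x).div hrpow
      (ne_of_gt hrpos)
  unfold pedrosaArea
  exact (hinv.add (hquot.mul hart)).const_mul _

lemma pedrosaArea_eval {H q L : ℝ} (hq1 : 1 < q) (h4 : 4 * H ^ 2 + 1 = q ^ 2)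
    (hL : (1 + 1 / q) / (1 - 1 / q) = L) :
    pedrosaArea H =
      8 * Real.pi * (1 / q ^ 2 + ((q ^ 2 - 1) / q ^ 3) * ((1/2) * Real.log L)) := by
  have hq : (0:ℝ) < q := lt_trans one_pos hq1
  have h4' : 4 * H ^ 2 = q ^ 2 - 1 := by linarith
  have hr : ((q ^ 2 : ℝ)) ^ ((3:ℝ)/2) = q ^ 3 := by
    rw [← Real.rpow_natCast q 2, ← Real.rpow_mul hq.le]
    rw [show ((2:ℕ):ℝ) * ((3:ℝ)/2) = ((3:ℕ):ℝ) by norm_num, Real.rpow_natCast]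
  unfold pedrosaArea _root_.artanh
  rw [h4, Real.sqrt_sq hq.le, hr, h4', hL]

lemma log21_gt : (3:ℝ) < Real.log 21 := by
  rw [Real.lt_log_iff_exp_lt (by norm_num)]
  have h3 : Real.exp 3 = Real.exp 1 ^ 3 := by
    rw [← Real.exp_nat_mul]; norm_num
  rw [h3]
  have h := Real.exp_one_lt_d9
  have hp : (0:ℝ) ≤ Real.exp 1 := (Real.exp_pos 1).le
  nlinarith [pow_lt_pow_left₀ h hp (n := 3), sq_nonneg (Real.exp 1)]

lemma log201_lt : Real.log 201 < 5.5 := by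
  rw [Real.log_lt_iff_lt_exp (by norm_num)]
  have h5 : Real.exp 5.5 = Real.exp 1 ^ 5 * Real.exp 0.5 := by
    rw [← Real.exp_nat_mul, ← Real.exp_add]; norm_num
  rw [h5]
  have h1 : (2.7182818283:ℝ) < Real.exp 1 := Real.exp_one_gt_d9
  have h2 : (1.5:ℝ) ≤ Real.exp 0.5 := by nlinarith [Real.add_one_le_exp (0.5:ℝ)]
  have h3 : (2.7182818283:ℝ)^5 ≤ Real.exp 1 ^ 5 :=
    pow_le_pow_left₀ (by norm_num) h1.le 5
  nlinarith [Real.exp_pos 1, Real.exp_pos 0.5]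

lemma val_a : pedrosaArea (Real.sqrt 201 / 200) =
    8 * Real.pi * (1 / ((101:ℝ)/100) ^ 2 +
      ((((101:ℝ)/100) ^ 2 - 1) / ((101:ℝ)/100) ^ 3) * ((1/2) * Real.log 201)) := by
  apply pedrosaArea_eval (by norm_num)
  · rw [div_pow, Real.sq_sqrt (by norm_num : (0:ℝ) ≤ 201)]; norm_num
  · norm_num

lemma val_b : pedrosaArea (Real.sqrt 21 / 20) =
    8 * Real.pi * (1 / ((11:ℝ)/10) ^ 2 +
      ((((11:ℝ)/10) ^ 2 - 1) / ((11:ℝ)/10) ^ 3) * ((1/2) * Real.log 21)) := by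
  apply pedrosaArea_eval (by norm_num)
  · rw [div_pow, Real.sq_sqrt (by norm_num : (0:ℝ) ≤ 21)]; norm_num
  · norm_num

lemma val_c : pedrosaArea (Real.sqrt 2) =
    8 * Real.pi * (1 / (3:ℝ) ^ 2 +
      (((3:ℝ) ^ 2 - 1) / (3:ℝ) ^ 3) * ((1/2) * Real.log 2)) := by
  apply pedrosaArea_eval (by norm_num)
  · rw [Real.sq_sqrt (by norm_num : (0:ℝ) ≤ 2)]; norm_num
  · norm_num

lemma cmp_ab : pedrosaArea (Real.sqrt 201 / 200) < pedrosaArea (Real.sqrt 21 / 20) := by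
  rw [val_a, val_b]
  have h1 := log21_gt
  have h2 := log201_lt
  have h3 : (0:ℝ) < Real.log 201 := Real.log_pos (by norm_num)
  have hpi : (0:ℝ) < 8 * Real.pi := by positivity
  refine mul_lt_mul_of_pos_left ?_ hpi
  nlinarith

lemma cmp_cb : pedrosaArea (Real.sqrt 2) < pedrosaArea (Real.sqrt 21 / 20) := by
  rw [val_c, val_b]
  have h1 := log21_gt
  have h2 := Real.log_two_lt_d9
  have h3 := Real.log_two_gt_d9
  have hpi : (0:ℝ) < 8 * Real.pi := by positivity
  refine mul_lt_mul_of_pos_left ?_ hpi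
  nlinarith

/-- If `H₀` is the unique zero of `A'` in `(0, ∞)`, then `A` is strictly
increasing on `(0, H₀]` and strictly decreasing on `[H₀, ∞)`. -/
theorem pedrosaArea_strictMonoOn_strictAntiOn (H₀ : ℝ) (hH₀ : H₀ ∈ Set.Ioi (0 : ℝ))
    (hzero : deriv pedrosaArea H₀ = 0)
    (huniq : ∀ H ∈ Set.Ioi (0 : ℝ), deriv pedrosaArea H = 0 → H = H₀) :
    StrictMonoOn pedrosaArea (Set.Ioc (0 : ℝ) H₀) ∧
      StrictAntiOn pedrosaArea (Set.Ici H₀) := by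
  have hH0 : (0:ℝ) < H₀ := hH₀
  have hcontL : ContinuousOn pedrosaArea (Set.Ioc (0:ℝ) H₀) := fun x hx =>
    (pedrosaArea_diff (ne_of_gt hx.1)).continuousAt.continuousWithinAt
  have hcontR : ContinuousOn pedrosaArea (Set.Ici H₀) := fun x hx =>
    (pedrosaArea_diff (ne_of_gt (lt_of_lt_of_le hH0 hx))).continuousAt.continuousWithinAt
  have dich : ∀ S : Set ℝ, Convex ℝ S → S ⊆ Set.Ioi 0 → H₀ ∉ S →
      (∀ x ∈ S, deriv pedrosaArea x < 0) ∨ (∀ x ∈ S, 0 < deriv pedrosaArea x) := by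
    intro S hconv hsub hH
    apply hasDerivWithinAt_forall_lt_or_forall_gt_of_forall_ne hconv
    · intro x hx
      exact ((pedrosaArea_diff (ne_of_gt (hsub hx))).hasDerivAt).hasDerivWithinAt
    · intro x hx h0
      exact hH (huniq x (hsub hx) h0 ▸ hx)
  have dichL := dich (Set.Ioo 0 H₀) (convex_Ioo _ _) (fun x hx => hx.1)
    (fun h => lt_irrefl H₀ h.2)
  have dichR := dich (Set.Ioi H₀) (convex_Ioi _) (fun x hx => lt_trans hH0 hx)
    (lt_irrefl H₀)
  have ML : StrictMonoOn pedrosaArea (Set.Ioc 0 H₀) ∨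
      StrictAntiOn pedrosaArea (Set.Ioc 0 H₀) := by
    rcases dichL with h | h
    · right
      apply strictAntiOn_of_deriv_neg (convex_Ioc 0 H₀) hcontL
      rwa [interior_Ioc]
    · left
      apply strictMonoOn_of_deriv_pos (convex_Ioc 0 H₀) hcontL
      rwa [interior_Ioc]
  have MR : StrictMonoOn pedrosaArea (Set.Ici H₀) ∨
      StrictAntiOn pedrosaArea (Set.Ici H₀) := by
    rcases dichR with h | h
    · right
      apply strictAntiOn_of_deriv_neg (convex_Ici H₀) hcontR
      rwa [interior_Ici]
    · left
      apply strictMonoOn_of_deriv_pos (convex_Ici H₀) hcontR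
      rwa [interior_Ici]
  -- sample points
  set a : ℝ := Real.sqrt 201 / 200 with ha_def
  set b : ℝ := Real.sqrt 21 / 20 with hb_def
  set c : ℝ := Real.sqrt 2 with hc_def
  have ha0 : 0 < a := by
    have : 0 < Real.sqrt 201 := Real.sqrt_pos.mpr (by norm_num)
    positivity
  have hb0 : 0 < b := by
    have : 0 < Real.sqrt 21 := Real.sqrt_pos.mpr (by norm_num)
    positivity
  have hab : a < b := by
    have h1 : Real.sqrt 201 < 15 := by
      rw [Real.sqrt_lt' (by norm_num)]; norm_num
    have h2 : (4:ℝ) < Real.sqrt 21 := by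
      rw [Real.lt_sqrt (by norm_num)]; norm_num
    rw [ha_def, hb_def]
    rw [div_lt_div_iff₀ (by norm_num) (by norm_num)]
    nlinarith
  have hbc : b < c := by
    have h1 : Real.sqrt 21 < 5 := by
      rw [Real.sqrt_lt' (by norm_num)]; norm_num
    have h2 : (1:ℝ) < Real.sqrt 2 := by
      rw [Real.lt_sqrt (by norm_num)]; norm_num
    rw [hb_def, hc_def]
    nlinarith
  have hcmp1 : pedrosaArea a < pedrosaArea b := cmp_ab
  have hcmp2 : pedrosaArea c < pedrosaArea b := cmp_cb
  rcases ML with hL | hL <;> rcases MR with hR | hR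
  · -- Mono, Mono : impossible since pedrosaArea b > pedrosaArea c with b < c
    exfalso
    rcases le_or_gt c H₀ with hc | hc
    · exact absurd (hL ⟨hb0, le_trans hbc.le hc⟩ ⟨lt_trans hb0 hbc, hc⟩ hbc)
        (not_lt.mpr hcmp2.le)
    · rcases le_or_gt b H₀ with hb | hb
      · have h1 : pedrosaArea b ≤ pedrosaArea H₀ :=
          hL.monotoneOn ⟨hb0, hb⟩ ⟨hH0, le_refl _⟩ hb
        have h2 : pedrosaArea H₀ < pedrosaArea c :=
          hR (le_refl H₀) hc.le hc
        linarith
      · have := hR hb.le (le_trans hb.le hbc.le) hbc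
        linarith
  · exact ⟨hL, hR⟩
  · -- Anti, Mono : impossible
    exfalso
    rcases le_or_gt b H₀ with hb | hb
    · have := hL ⟨ha0, le_trans hab.le hb⟩ ⟨hb0, hb⟩ hab
      linarith
    · have := hR hb.le (le_trans hb.le hbc.le) hbc
      linarith
  · -- Anti, Anti : impossible
    exfalso
    rcases le_or_gt b H₀ with hb | hb
    · have := hL ⟨ha0, le_trans hab.le hb⟩ ⟨hb0, hb⟩ hab
      linarith
    · rcases le_or_gt a H₀ with haH | haH
      · have h1 : pedrosaArea H₀ ≤ pedrosaArea a :=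
          hL.antitoneOn ⟨ha0, haH⟩ ⟨hH0, le_refl _⟩ haH
        have h2 : pedrosaArea b < pedrosaArea H₀ :=
          hR (le_refl H₀) hb.le hb
        linarith
      · have := hR haH.le (le_trans haH.le hab.le) hab
        linarith
end

section
/- Let H₀ ∈ (0, ∞) be the unique zero of the derivative of A(H) = 8π·(1/(4H²+1) + (4H²/(4H²+1)^{3/2})·artanh(1/√(4H²+1))) on (0, ∞). Then A attains its strict global maximum on (0, ∞) at H₀; that is, A(H) < A(H₀) for every H ∈ (0, ∞) with H ≠ H₀. -/
open Real Set

lemma pedrosa_hasDerivAt {H : ℝ} (hH : 0 < H) :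
    HasDerivAt pedrosaArea
      (32 * Real.pi * H * ((3 - (4 * H ^ 2 + 1)) * _root_.artanh ((Real.sqrt (4 * H ^ 2 + 1))⁻¹)
        - 3 * Real.sqrt (4 * H ^ 2 + 1)) / ((4 * H ^ 2 + 1) ^ 2 * Real.sqrt (4 * H ^ 2 + 1))) H := by
  have hfun : pedrosaArea = fun x : ℝ => 8 * Real.pi * ((4 * x ^ 2 + 1)⁻¹ +
      (4 * x ^ 2 / ((4 * x ^ 2 + 1) * Real.sqrt (4 * x ^ 2 + 1))) *
        _root_.artanh ((Real.sqrt (4 * x ^ 2 + 1))⁻¹)) := by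
    funext x
    have hu : (0:ℝ) < 4 * x ^ 2 + 1 := by positivity
    have h32 : (4 * x ^ 2 + 1 : ℝ) ^ ((3:ℝ)/2)
        = (4 * x ^ 2 + 1) * Real.sqrt (4 * x ^ 2 + 1) := by
      rw [show ((3:ℝ)/2) = (1:ℝ) + 1/2 by norm_num, Real.rpow_add hu, Real.rpow_one,
        ← Real.sqrt_eq_rpow]
    simp only [pedrosaArea, h32, one_div]
  have hu : (0:ℝ) < 4 * H ^ 2 + 1 := by positivity
  have hs0 : (0:ℝ) < Real.sqrt (4 * H ^ 2 + 1) := Real.sqrt_pos.2 hu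
  have hs1 : (1:ℝ) < Real.sqrt (4 * H ^ 2 + 1) := by
    rw [Real.lt_sqrt zero_le_one]
    nlinarith
  have hss : (Real.sqrt (4 * H ^ 2 + 1)) ^ 2 = 4 * H ^ 2 + 1 := Real.sq_sqrt hu.le
  have hu' : HasDerivAt (fun x : ℝ => 4 * x ^ 2 + 1) (8 * H) H := by
    have := ((hasDerivAt_pow 2 H).const_mul 4).add_const 1
    refine this.congr_deriv ?_
    simp; ring
  have hs' : HasDerivAt (fun x : ℝ => Real.sqrt (4 * x ^ 2 + 1))
      (1 / (2 * Real.sqrt (4 * H ^ 2 + 1)) * (8 * H)) H :=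
    (Real.hasDerivAt_sqrt (ne_of_gt hu)).comp H hu'
  have hd1 : HasDerivAt (fun x : ℝ => (4 * x ^ 2 + 1)⁻¹)
      (-(8 * H) / (4 * H ^ 2 + 1) ^ 2) H := hu'.inv (ne_of_gt hu)
  have ht : HasDerivAt (fun x : ℝ => (Real.sqrt (4 * x ^ 2 + 1))⁻¹)
      (-(1 / (2 * Real.sqrt (4 * H ^ 2 + 1)) * (8 * H)) / (Real.sqrt (4 * H ^ 2 + 1)) ^ 2) H :=
    hs'.inv (ne_of_gt hs0)
  have hti : (Real.sqrt (4 * H ^ 2 + 1))⁻¹ < 1 := by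
    rw [inv_lt_one_iff₀]; right; exact hs1
  have hti' : (-1:ℝ) < (Real.sqrt (4 * H ^ 2 + 1))⁻¹ := by
    have : (0:ℝ) < (Real.sqrt (4 * H ^ 2 + 1))⁻¹ := by positivity
    linarith
  have hat : HasDerivAt (fun x : ℝ => _root_.artanh ((Real.sqrt (4 * x ^ 2 + 1))⁻¹))
      ((1 / (1 - ((Real.sqrt (4 * H ^ 2 + 1))⁻¹) ^ 2)) *
        (-(1 / (2 * Real.sqrt (4 * H ^ 2 + 1)) * (8 * H)) / (Real.sqrt (4 * H ^ 2 + 1)) ^ 2)) H :=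
    HasDerivAt.comp (h₂ := _root_.artanh) H (hasDerivAt_artanh hti' hti) ht
  have hden : HasDerivAt (fun x : ℝ => (4 * x ^ 2 + 1) * Real.sqrt (4 * x ^ 2 + 1))
      (8 * H * Real.sqrt (4 * H ^ 2 + 1) +
        (4 * H ^ 2 + 1) * (1 / (2 * Real.sqrt (4 * H ^ 2 + 1)) * (8 * H))) H := hu'.mul hs'
  have hnum : HasDerivAt (fun x : ℝ => 4 * x ^ 2) (8 * H) H := by
    have := (hasDerivAt_pow 2 H).const_mul 4
    refine this.congr_deriv ?_
    simp; ring
  have hfrac : HasDerivAt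
      (fun x : ℝ => 4 * x ^ 2 / ((4 * x ^ 2 + 1) * Real.sqrt (4 * x ^ 2 + 1)))
      ((8 * H * ((4 * H ^ 2 + 1) * Real.sqrt (4 * H ^ 2 + 1)) -
        4 * H ^ 2 * (8 * H * Real.sqrt (4 * H ^ 2 + 1) +
          (4 * H ^ 2 + 1) * (1 / (2 * Real.sqrt (4 * H ^ 2 + 1)) * (8 * H)))) /
        ((4 * H ^ 2 + 1) * Real.sqrt (4 * H ^ 2 + 1)) ^ 2) H :=
    hnum.div hden (by positivity)
  have htot := (hd1.add (hfrac.mul hat)).const_mul (8 * Real.pi)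
  rw [hfun]
  refine htot.congr_deriv ?_
  set s := Real.sqrt (4 * H ^ 2 + 1) with hs
  have h4 : (4:ℝ) * H ^ 2 = s ^ 2 - 1 := by rw [hss]; ring
  rw [h4]
  have hsne : s ≠ 0 := ne_of_gt hs0
  have hs2ne : s ^ 2 ≠ 0 := pow_ne_zero 2 hsne
  have h1s : (1:ℝ) - (s⁻¹) ^ 2 ≠ 0 := by
    have : (s⁻¹) ^ 2 < 1 := by
      rw [inv_pow]
      apply inv_lt_one_of_one_lt₀
      nlinarith
    linarith
  have hs21 : s ^ 2 - 1 ≠ 0 := by nlinarith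
  have hrw : 1 - s⁻¹ ^ 2 = (s ^ 2 - 1) / s ^ 2 := by field_simp
  rw [hrw]
  field_simp
  ring

lemma pedrosa_deriv_pos : 0 < deriv pedrosaArea (1/100) := by
  rw [(pedrosa_hasDerivAt (by norm_num : (0:ℝ) < 1/100)).deriv]
  have h1 : (4 * ((1:ℝ)/100) ^ 2 + 1) = 2501/2500 := by norm_num
  rw [h1]
  set s := Real.sqrt (2501/2500) with hs
  have hs1 : (1:ℝ) < s := by rw [hs, Real.lt_sqrt zero_le_one]; norm_num
  have hs2 : s ≤ 5001/5000 := by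
    rw [hs, show (5001/5000:ℝ) = Real.sqrt ((5001/5000) ^ 2) from
      (Real.sqrt_sq (by norm_num)).symm]
    exact Real.sqrt_le_sqrt (by norm_num)
  have ht0 : (0:ℝ) < s⁻¹ := by positivity
  have hts : s⁻¹ * s = 1 := inv_mul_cancel₀ (by positivity)
  have ht1 : (5000/5001:ℝ) ≤ s⁻¹ := by nlinarith [mul_le_mul_of_nonneg_left hs2 ht0.le]
  have htl1 : s⁻¹ < 1 := inv_lt_one_of_one_lt₀ hs1
  have harg : (10000:ℝ) ≤ (1 + s⁻¹) / (1 - s⁻¹) := by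
    rw [le_div_iff₀ (by linarith)]
    nlinarith
  have hexp : Real.exp 4 < 10000 := by
    rw [show (4:ℝ) = 1 + 1 + 1 + 1 by norm_num, Real.exp_add, Real.exp_add, Real.exp_add]
    have h := Real.exp_one_lt_d9
    have hp := Real.exp_pos 1
    have h2 : Real.exp 1 * Real.exp 1 < 7.39 := by nlinarith
    nlinarith
  have hT : 2 < _root_.artanh s⁻¹ := by
    rw [_root_.artanh]
    have hargpos : (0:ℝ) < (1 + s⁻¹) / (1 - s⁻¹) := div_pos (by linarith) (by linarith)
    have h4 : (4:ℝ) < Real.log ((1 + s⁻¹) / (1 - s⁻¹)) :=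
      (Real.lt_log_iff_exp_lt hargpos).2 (lt_of_lt_of_le hexp harg)
    linarith
  have hnum : 0 < (3 - (2501/2500:ℝ)) * _root_.artanh s⁻¹ - 3 * s := by nlinarith
  have hpi := Real.pi_pos
  exact div_pos (mul_pos (by positivity) hnum) (by positivity)

lemma pedrosa_deriv_neg : deriv pedrosaArea 100 < 0 := by
  rw [(pedrosa_hasDerivAt (by norm_num : (0:ℝ) < 100)).deriv]
  have h1 : (4 * (100:ℝ) ^ 2 + 1) = 40001 := by norm_num
  rw [h1]
  set s := Real.sqrt 40001 with hs
  have hs1 : (1:ℝ) < s := by rw [hs, Real.lt_sqrt zero_le_one]; norm_num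
  have ht0 : (0:ℝ) < s⁻¹ := by positivity
  have htl1 : s⁻¹ < 1 := inv_lt_one_of_one_lt₀ hs1
  have hT : 0 < _root_.artanh s⁻¹ := by
    rw [_root_.artanh]
    have : (1:ℝ) < (1 + s⁻¹) / (1 - s⁻¹) := (one_lt_div (by linarith)).2 (by linarith)
    have := Real.log_pos this
    linarith
  have hnum : (3 - (40001:ℝ)) * _root_.artanh s⁻¹ - 3 * s < 0 := by nlinarith
  have hpi := Real.pi_pos
  exact div_neg_of_neg_of_pos (mul_neg_of_pos_of_neg (by positivity) hnum) (by positivity)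

/-- If `H₀` is the unique zero of `A'` in `(0, ∞)`, then `A` attains its strict
global maximum on `(0, ∞)` at `H₀`. -/
theorem pedrosaArea_strict_max (H₀ : ℝ) (hH₀ : H₀ ∈ Set.Ioi (0 : ℝ))
    (hzero : deriv pedrosaArea H₀ = 0)
    (huniq : ∀ H ∈ Set.Ioi (0 : ℝ), deriv pedrosaArea H = 0 → H = H₀) :
    ∀ H ∈ Set.Ioi (0 : ℝ), H ≠ H₀ → pedrosaArea H < pedrosaArea H₀ := by
  have h0 : (0:ℝ) < H₀ := hH₀
  have hdAt : ∀ x : ℝ, 0 < x → HasDerivAt pedrosaArea (deriv pedrosaArea x) x :=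
    fun x hx => ((pedrosa_hasDerivAt hx).differentiableAt).hasDerivAt
  have darboux : ∀ a b : ℝ, 0 < a → a ≤ b → deriv pedrosaArea b < 0 →
      0 < deriv pedrosaArea a → ∃ c, c ∈ Ioo a b ∧ deriv pedrosaArea c = 0 := by
    intro a b ha hab hb hpa
    obtain ⟨c, hc, hc0⟩ := exists_hasDerivWithinAt_eq_of_lt_of_gt hab
      (fun x hx => (hdAt x (lt_of_lt_of_le ha hx.1)).hasDerivWithinAt) (m := 0) hpa hb
    exact ⟨c, hc, hc0⟩
  have darboux' : ∀ a b : ℝ, 0 < a → a ≤ b → deriv pedrosaArea a < 0 →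
      0 < deriv pedrosaArea b → ∃ c, c ∈ Ioo a b ∧ deriv pedrosaArea c = 0 := by
    intro a b ha hab ha' hb'
    obtain ⟨c, hc, hc0⟩ := exists_hasDerivWithinAt_eq_of_gt_of_lt hab
      (fun x hx => (hdAt x (lt_of_lt_of_le ha hx.1)).hasDerivWithinAt) (m := 0) ha' hb'
    exact ⟨c, hc, hc0⟩
  have hpos := pedrosa_deriv_pos
  have hneg := pedrosa_deriv_neg
  obtain ⟨c, hc, hc0⟩ := darboux (1/100) 100 (by norm_num) (by norm_num) hneg hpos
  have hcH₀ : c = H₀ := huniq c (mem_Ioi.2 (by linarith [hc.1])) hc0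
  have hH₀gt : (1:ℝ)/100 < H₀ := hcH₀ ▸ hc.1
  have hH₀lt : H₀ < 100 := hcH₀ ▸ hc.2
  have signpos : ∀ x : ℝ, 0 < x → x < H₀ → 0 < deriv pedrosaArea x := by
    intro x hx hxH
    rcases lt_trichotomy (deriv pedrosaArea x) 0 with h | h | h
    · exfalso
      rcases lt_trichotomy x (1/100) with h2 | h2 | h2
      · obtain ⟨d, hd, hd0⟩ := darboux' x (1/100) hx h2.le h hpos
        have hde := huniq d (mem_Ioi.2 (lt_trans hx hd.1)) hd0
        rw [hde] at hd
        linarith [hd.2]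
      · rw [h2] at h; linarith
      · obtain ⟨d, hd, hd0⟩ := darboux (1/100) x (by norm_num) h2.le h hpos
        have hde := huniq d (mem_Ioi.2 (by linarith [hd.1])) hd0
        rw [hde] at hd
        linarith [hd.2]
    · exact absurd (huniq x (mem_Ioi.2 hx) h) (ne_of_lt hxH)
    · exact h
  have signneg : ∀ x : ℝ, H₀ < x → deriv pedrosaArea x < 0 := by
    intro x hx
    have hx0 : 0 < x := lt_trans h0 hx
    rcases lt_trichotomy (deriv pedrosaArea x) 0 with h | h | h
    · exact h
    · exact absurd (huniq x (mem_Ioi.2 hx0) h) (ne_of_gt hx)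
    · exfalso
      rcases lt_trichotomy x 100 with h2 | h2 | h2
      · obtain ⟨d, hd, hd0⟩ := darboux x 100 hx0 h2.le hneg h
        have hde := huniq d (mem_Ioi.2 (lt_trans hx0 hd.1)) hd0
        rw [hde] at hd
        linarith [hd.1]
      · rw [h2] at h; linarith
      · obtain ⟨d, hd, hd0⟩ := darboux' 100 x (by norm_num) h2.le hneg h
        have hde := huniq d (mem_Ioi.2 (by linarith [hd.1])) hd0
        rw [hde] at hd
        linarith [hd.1]
  intro H hH hne
  have hHpos : 0 < H := hH
  rcases lt_or_gt_of_ne hne with hlt | hgt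
  · have hmono : StrictMonoOn pedrosaArea (Icc H H₀) := by
      apply strictMonoOn_of_deriv_pos (convex_Icc _ _)
      · intro y hy
        exact ((pedrosa_hasDerivAt
          (lt_of_lt_of_le hHpos hy.1)).differentiableAt).continuousAt.continuousWithinAt
      · intro y hy
        rw [interior_Icc] at hy
        exact signpos y (lt_trans hHpos hy.1) hy.2
    exact hmono (left_mem_Icc.2 hlt.le) (right_mem_Icc.2 hlt.le) hlt
  · have hanti : StrictAntiOn pedrosaArea (Icc H₀ H) := by
      apply strictAntiOn_of_deriv_neg (convex_Icc _ _)
      · intro y hy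
        exact ((pedrosa_hasDerivAt
          (lt_of_lt_of_le h0 hy.1)).differentiableAt).continuousAt.continuousWithinAt
      · intro y hy
        rw [interior_Icc] at hy
        exact signneg y hy.1
    exact hanti (left_mem_Icc.2 hgt.le) (right_mem_Icc.2 hgt.le) hgt
end

section
/- Let H₀ ∈ (0, ∞) be the unique zero of the derivative of A(H) = 8π·(1/(4H²+1) + (4H²/(4H²+1)^{3/2})·artanh(1/√(4H²+1))) on (0, ∞). Then 0.17 < H₀ < 0.19 (so H₀ ≈ 0.18). -/
open Real Set

/-- Auxiliary: the area as a function of `u = 4H² + 1`, in `sqrt`/`log` form. -/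
noncomputable def phiP (u : ℝ) : ℝ :=
  1 / u + (u - 1) / (u * Real.sqrt u) *
    ((1 / 2) * (Real.log (Real.sqrt u + 1) - Real.log (Real.sqrt u - 1)))

/-- Auxiliary: the derivative of `phiP`. -/
noncomputable def psiP (u : ℝ) : ℝ :=
  ((3 - u) * ((1 / 2) * (Real.log (Real.sqrt u + 1) - Real.log (Real.sqrt u - 1)))
    - 3 * Real.sqrt u) / (2 * u ^ 2 * Real.sqrt u)

lemma hasDerivAt_phiP {u : ℝ} (hu : 1 < u) : HasDerivAt phiP (psiP u) u := by
  have hu0 : (0 : ℝ) < u := by linarith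
  have hune : u ≠ 0 := ne_of_gt hu0
  have hs1 : 1 < Real.sqrt u := by
    rw [show (1:ℝ) = Real.sqrt 1 by simp]
    exact Real.sqrt_lt_sqrt (by norm_num) hu
  have hs0 : (0:ℝ) < Real.sqrt u := by linarith
  have hsne : Real.sqrt u ≠ 0 := ne_of_gt hs0
  have hsq : Real.sqrt u ^ 2 = u := Real.sq_sqrt hu0.le
  have hd_sqrt : HasDerivAt Real.sqrt (1 / (2 * Real.sqrt u)) u :=
    Real.hasDerivAt_sqrt hune
  have h_inv : HasDerivAt (fun x : ℝ => 1 / x) (-(u ^ 2)⁻¹) u := by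
    simpa [one_div] using hasDerivAt_inv hune
  have h_num : HasDerivAt (fun x : ℝ => x - 1) 1 u := (hasDerivAt_id u).sub_const 1
  have h_den : HasDerivAt (fun x : ℝ => x * Real.sqrt x)
      (1 * Real.sqrt u + u * (1 / (2 * Real.sqrt u))) u :=
    (hasDerivAt_id u).mul hd_sqrt
  have hdenne : u * Real.sqrt u ≠ 0 := by positivity
  have h_a : HasDerivAt (fun x : ℝ => (x - 1) / (x * Real.sqrt x))
      ((1 * (u * Real.sqrt u) - (u - 1) * (1 * Real.sqrt u + u * (1 / (2 * Real.sqrt u))))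
        / (u * Real.sqrt u) ^ 2) u := h_num.div h_den hdenne
  have h_l1 : HasDerivAt (fun x : ℝ => Real.log (Real.sqrt x + 1))
      ((1 / (2 * Real.sqrt u)) / (Real.sqrt u + 1)) u :=
    (hd_sqrt.add_const 1).log (by positivity)
  have h_l2 : HasDerivAt (fun x : ℝ => Real.log (Real.sqrt x - 1))
      ((1 / (2 * Real.sqrt u)) / (Real.sqrt u - 1)) u :=
    (hd_sqrt.sub_const 1).log (by linarith)
  have h_L : HasDerivAt
      (fun x : ℝ => (1 / 2) * (Real.log (Real.sqrt x + 1) - Real.log (Real.sqrt x - 1)))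
      ((1 / 2) * ((1 / (2 * Real.sqrt u)) / (Real.sqrt u + 1)
        - (1 / (2 * Real.sqrt u)) / (Real.sqrt u - 1))) u :=
    (h_l1.sub h_l2).const_mul (1 / 2)
  have h_total := h_inv.add (h_a.mul h_L)
  have hkey : psiP u =
      -(u ^ 2)⁻¹ +
      (((1 * (u * Real.sqrt u) - (u - 1) * (1 * Real.sqrt u + u * (1 / (2 * Real.sqrt u))))
        / (u * Real.sqrt u) ^ 2) *
        ((1 / 2) * (Real.log (Real.sqrt u + 1) - Real.log (Real.sqrt u - 1)))
      + ((u - 1) / (u * Real.sqrt u)) *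
        ((1 / 2) * ((1 / (2 * Real.sqrt u)) / (Real.sqrt u + 1)
          - (1 / (2 * Real.sqrt u)) / (Real.sqrt u - 1)))) := by
    unfold psiP
    set s := Real.sqrt u with hsdef
    have h1 : s + 1 ≠ 0 := by positivity
    have h2 : s - 1 ≠ 0 := by linarith
    rw [← hsq]
    field_simp
    ring
  rw [hkey]
  exact h_total.congr_deriv rfl |>.congr_of_eventuallyEq (by rfl) |>.congr_deriv rfl

lemma hasDerivAt_areaP (H : ℝ) (hH : H ≠ 0) :
    HasDerivAt (fun x : ℝ => 8 * Real.pi * phiP (4 * x ^ 2 + 1))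
      (8 * Real.pi * (psiP (4 * H ^ 2 + 1) * (8 * H))) H := by
  have hu : HasDerivAt (fun x : ℝ => 4 * x ^ 2 + 1) (8 * H) H := by
    have h := ((hasDerivAt_pow 2 H).const_mul 4).add_const 1
    refine h.congr_deriv ?_
    show (4:ℝ) * ((2:ℕ) * H ^ 1) = 8 * H
    push_cast
    ring
  have hH2 : 0 < H ^ 2 := by positivity
  have h1 : 1 < 4 * H ^ 2 + 1 := by nlinarith
  have hcomp := (hasDerivAt_phiP h1).comp H hu
  exact hcomp.const_mul (8 * Real.pi)

lemma pedrosa_eqP (H : ℝ) (hH : H ≠ 0) :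
    pedrosaArea H = 8 * Real.pi * phiP (4 * H ^ 2 + 1) := by
  have hH2 : 0 < H ^ 2 := by positivity
  have hu0 : (0:ℝ) < 4 * H ^ 2 + 1 := by positivity
  have hu1 : (1:ℝ) < 4 * H ^ 2 + 1 := by nlinarith
  have hs1 : 1 < Real.sqrt (4 * H ^ 2 + 1) := by
    have h := (Real.lt_sqrt (by norm_num : (0:ℝ) ≤ 1)).mpr
      (by nlinarith : (1:ℝ) ^ 2 < 4 * H ^ 2 + 1)
    simpa using h
  set u := 4 * H ^ 2 + 1 with hudef
  set s := Real.sqrt u with hsdef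
  have hs0 : (0:ℝ) < s := by linarith
  have hsq : s ^ 2 = u := Real.sq_sqrt hu0.le
  have hrpow : u ^ ((3:ℝ)/2) = u * s := by
    rw [show ((3:ℝ)/2) = 1 + 1/2 by norm_num, Real.rpow_add hu0, Real.rpow_one,
      hsdef, Real.sqrt_eq_rpow]
  have hart : _root_.artanh (1 / s) = (1/2) * (Real.log (s + 1) - Real.log (s - 1)) := by
    unfold _root_.artanh
    have h1 : (1 + 1 / s) / (1 - 1 / s) = (s + 1) / (s - 1) := by
      rw [div_eq_div_iff]
      · field_simp
      · have : 1 / s < 1 := by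
          rw [div_lt_one hs0]; exact hs1
        linarith
      · linarith
    rw [h1, Real.log_div (by positivity) (by linarith)]
  unfold pedrosaArea phiP
  rw [← hudef, ← hsdef, hrpow, hart]
  have hu1' : u - 1 = 4 * H ^ 2 := by rw [hudef]; ring
  rw [← hu1']

lemma deriv_pedrosaP (H : ℝ) (hH : 0 < H) :
    deriv pedrosaArea H = 8 * Real.pi * (psiP (4 * H ^ 2 + 1) * (8 * H)) := by
  have hev : pedrosaArea =ᶠ[nhds H] fun x : ℝ => 8 * Real.pi * phiP (4 * x ^ 2 + 1) := by
    filter_upwards [isOpen_Ioi.mem_nhds (show H ∈ Ioi (0:ℝ) from hH)] with x hx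
    exact pedrosa_eqP x (ne_of_gt hx)
  rw [hev.deriv_eq]
  exact (hasDerivAt_areaP H (ne_of_gt hH)).deriv

lemma psiP_pos : 0 < psiP 1.1156 := by
  have hu0 : (0:ℝ) < 1.1156 := by norm_num
  set s := Real.sqrt 1.1156 with hsdef
  have hs1 : 1 < s := by
    have h := (Real.lt_sqrt (by norm_num : (0:ℝ) ≤ 1)).mpr
      (by norm_num : (1:ℝ) ^ 2 < 1.1156)
    simpa [hsdef] using h
  have hs_up : s < 1.05623 := by
    have h := (Real.sqrt_lt' (by norm_num : (0:ℝ) < 1.05623)).mpr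
      (by norm_num : (1.1156:ℝ) < 1.05623 ^ 2)
    simpa [hsdef] using h
  have hs0 : (0:ℝ) < s := by linarith
  -- lower bound on the log part
  have hratio : (36.56:ℝ) ≤ (s + 1) / (s - 1) := by
    rw [le_div_iff₀ (by linarith)]
    nlinarith
  have hlogr : Real.log 36.56 ≤ Real.log ((s + 1) / (s - 1)) := by
    gcongr
  have hsplit : Real.log (36.56:ℝ) = 5 * Real.log 2 + Real.log 1.1425 := by
    rw [show (36.56:ℝ) = 2 ^ 5 * 1.1425 by norm_num, Real.log_mul (by norm_num) (by norm_num),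
      Real.log_pow]
    norm_num
  have hlog1425 : (1:ℝ) - 1 / 1.1425 ≤ Real.log 1.1425 := by
    have h := Real.log_le_sub_one_of_pos (show (0:ℝ) < (1.1425:ℝ)⁻¹ by norm_num)
    rw [Real.log_inv] at h
    have : (1.1425:ℝ)⁻¹ = 1 / 1.1425 := by norm_num
    linarith [h, this ▸ h]
  have hlog2 := Real.log_two_gt_d9
  have hL : (1.7952:ℝ) ≤ (1/2) * (Real.log (s + 1) - Real.log (s - 1)) := by
    have hld : Real.log (s + 1) - Real.log (s - 1) = Real.log ((s + 1) / (s - 1)) :=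
      (Real.log_div (by positivity) (by linarith)).symm
    rw [hld]
    nlinarith [hlogr, hsplit, hlog1425, hlog2]
  unfold psiP
  rw [← hsdef]
  apply div_pos
  · nlinarith
  · positivity

lemma psiP_neg : psiP 1.1444 < 0 := by
  have hu0 : (0:ℝ) < 1.1444 := by norm_num
  set s := Real.sqrt 1.1444 with hsdef
  have hs_lo : (1.06976:ℝ) < s := by
    have h := (Real.lt_sqrt (by norm_num : (0:ℝ) ≤ 1.06976)).mpr
      (by norm_num : (1.06976:ℝ) ^ 2 < 1.1444)
    simpa [hsdef] using h
  have hs1 : 1 < s := by linarith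
  have hs_up : s < 1.07 := by
    have h := (Real.sqrt_lt' (by norm_num : (0:ℝ) < 1.07)).mpr
      (by norm_num : (1.1444:ℝ) < 1.07 ^ 2)
    simpa [hsdef] using h
  have hratio : (s + 1) / (s - 1) ≤ 29.67 := by
    rw [div_le_iff₀ (by linarith)]
    nlinarith
  have hlogr : Real.log ((s + 1) / (s - 1)) ≤ Real.log 29.67 := by
    gcongr
  have hsplit : Real.log (29.67:ℝ) = 5 * Real.log 2 + Real.log 0.9271875 := by
    rw [show (29.67:ℝ) = 2 ^ 5 * 0.9271875 by norm_num, Real.log_mul (by norm_num) (by norm_num),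
      Real.log_pow]
    norm_num
  have hlogp : Real.log (0.9271875:ℝ) ≤ 0.9271875 - 1 :=
    Real.log_le_sub_one_of_pos (by norm_num)
  have hlog2 := Real.log_two_lt_d9
  have hL : (1/2) * (Real.log (s + 1) - Real.log (s - 1)) ≤ 1.6965 := by
    have hld : Real.log (s + 1) - Real.log (s - 1) = Real.log ((s + 1) / (s - 1)) :=
      (Real.log_div (by positivity) (by linarith)).symm
    rw [hld]
    nlinarith [hlogr, hsplit, hlogp, hlog2]
  have hLpos : 0 < (1/2) * (Real.log (s + 1) - Real.log (s - 1)) := by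
    have h1 : Real.log (s - 1) < 0 :=
      Real.log_neg (by linarith) (by linarith)
    have h2 : 0 < Real.log (s + 1) := Real.log_pos (by linarith)
    nlinarith
  unfold psiP
  rw [← hsdef]
  apply div_neg_of_neg_of_pos
  · nlinarith
  · positivity

lemma contG : ContinuousOn
    (fun H : ℝ => 8 * Real.pi * (psiP (4 * H ^ 2 + 1) * (8 * H)))
    (Icc (0.17:ℝ) 0.19) := by
  have hu1 : ∀ H ∈ Icc (0.17:ℝ) 0.19, (1:ℝ) < 4 * H ^ 2 + 1 := by
    intro H hH
    have h1 := hH.1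
    nlinarith
  have hs1 : ∀ H ∈ Icc (0.17:ℝ) 0.19, (1:ℝ) < Real.sqrt (4 * H ^ 2 + 1) := by
    intro H hH
    have h := (Real.lt_sqrt (by norm_num : (0:ℝ) ≤ 1)).mpr
      (by nlinarith [hu1 H hH] : (1:ℝ) ^ 2 < 4 * H ^ 2 + 1)
    simpa using h
  have hcu : ContinuousOn (fun H : ℝ => 4 * H ^ 2 + 1) (Icc (0.17:ℝ) 0.19) := by
    fun_prop
  have hcs : ContinuousOn (fun H : ℝ => Real.sqrt (4 * H ^ 2 + 1)) (Icc (0.17:ℝ) 0.19) :=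
    Real.continuous_sqrt.comp_continuousOn hcu
  have hl1 : ContinuousOn (fun H : ℝ => Real.log (Real.sqrt (4 * H ^ 2 + 1) + 1))
      (Icc (0.17:ℝ) 0.19) := by
    apply ContinuousOn.log (hcs.add continuousOn_const)
    intro H hH
    have := hs1 H hH
    show Real.sqrt (4 * H ^ 2 + 1) + 1 ≠ 0
    positivity
  have hl2 : ContinuousOn (fun H : ℝ => Real.log (Real.sqrt (4 * H ^ 2 + 1) - 1))
      (Icc (0.17:ℝ) 0.19) := by
    apply ContinuousOn.log (hcs.sub continuousOn_const)
    intro H hH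
    have := hs1 H hH
    show Real.sqrt (4 * H ^ 2 + 1) - 1 ≠ 0
    linarith
  have hpsi : ContinuousOn (fun H : ℝ => psiP (4 * H ^ 2 + 1)) (Icc (0.17:ℝ) 0.19) := by
    unfold psiP
    apply ContinuousOn.div
    · exact ((continuousOn_const.sub hcu).mul
        (continuousOn_const.mul (hl1.sub hl2))).sub (continuousOn_const.mul hcs)
    · exact (continuousOn_const.mul (hcu.pow 2)).mul hcs
    · intro H hH
      have h1 := hu1 H hH
      have h2 := hs1 H hH
      positivity
  exact continuousOn_const.mul (hpsi.mul (by fun_prop))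

/-- If `H₀` is the unique zero of `A'` in `(0, ∞)`, then `0.17 < H₀ < 0.19`. -/
theorem pedrosaArea_critical_value_bounds (H₀ : ℝ) (hH₀ : H₀ ∈ Set.Ioi (0 : ℝ))
    (hzero : deriv pedrosaArea H₀ = 0)
    (huniq : ∀ H ∈ Set.Ioi (0 : ℝ), deriv pedrosaArea H = 0 → H = H₀) :
    0.17 < H₀ ∧ H₀ < 0.19 := by
  set G : ℝ → ℝ := fun H => 8 * Real.pi * (psiP (4 * H ^ 2 + 1) * (8 * H)) with hGdef
  have hG17 : 0 < G 0.17 := by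
    have h : (4 * (0.17:ℝ) ^ 2 + 1) = 1.1156 := by norm_num
    rw [hGdef]
    simp only [h]
    have := psiP_pos
    have hpi := Real.pi_pos
    nlinarith
  have hG19 : G 0.19 < 0 := by
    have h : (4 * (0.19:ℝ) ^ 2 + 1) = 1.1444 := by norm_num
    rw [hGdef]
    simp only [h]
    have := psiP_neg
    have hpi := Real.pi_pos
    nlinarith
  have hsub := intermediate_value_Ioo' (by norm_num : (0.17:ℝ) ≤ 0.19) contG
  obtain ⟨c, hc, hGc⟩ := hsub ⟨hG19, hG17⟩
  have hc0 : (0:ℝ) < c := lt_trans (by norm_num) hc.1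
  have hder : deriv pedrosaArea c = 0 := by
    rw [deriv_pedrosaP c hc0]
    exact hGc
  have hcH : c = H₀ := huniq c hc0 hder
  exact ⟨hcH ▸ hc.1, hcH ▸ hc.2⟩
end

section
/- The derivative of the function A(H) = 8π·(1/(4H²+1) + (4H²/(4H²+1)^{3/2})·artanh(1/√(4H²+1))) is strictly positive at H = 0.17 and strictly negative at H = 0.19. -/
open Real Set

noncomputable def gAux (H : ℝ) : ℝ :=
  8 * Real.pi * (((Real.sqrt (4 * H ^ 2 + 1)) ^ 2)⁻¹ +
    (4 * H ^ 2) * ((Real.sqrt (4 * H ^ 2 + 1)) ^ 3)⁻¹ *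
      ((1/2) * (Real.log (Real.sqrt (4 * H ^ 2 + 1) + 1) -
                Real.log (Real.sqrt (4 * H ^ 2 + 1) - 1))))

lemma pedrosa_eq_gAux {H : ℝ} (hH : 0 < H) : pedrosaArea H = gAux H := by
  have hu : (1:ℝ) < 4 * H ^ 2 + 1 := by nlinarith
  set s := Real.sqrt (4 * H ^ 2 + 1) with hsdef
  have hs1 : 1 < s := by
    have := Real.sqrt_lt_sqrt (le_of_lt one_pos) hu
    simpa using this
  have hs0 : 0 < s := by linarith
  have hs2 : s ^ 2 = 4 * H ^ 2 + 1 := Real.sq_sqrt (by positivity)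
  have hrpow : (4 * H ^ 2 + 1) ^ ((3:ℝ)/2) = s ^ 3 := by
    rw [show ((3:ℝ)/2) = (1/2) * (3:ℕ) by push_cast; ring,
        Real.rpow_mul (by positivity), Real.rpow_natCast,
        ← Real.sqrt_eq_rpow]
  have hart : _root_.artanh (1 / s) = (1/2) * (Real.log (s + 1) - Real.log (s - 1)) := by
    rw [_root_.artanh]
    congr 1
    have hinv : 1 / s < 1 := by rw [div_lt_one hs0]; exact hs1
    have hne1 : 1 - 1 / s ≠ 0 := by linarith
    rw [show (1 + 1/s) / (1 - 1/s) = (s+1)/(s-1) by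
      rw [div_eq_div_iff hne1 (sub_ne_zero.mpr hs1.ne')]
      field_simp]
    rw [Real.log_div (by positivity) (by linarith)]
  rw [pedrosaArea, gAux, hrpow, hart, ← hs2]
  field_simp
  rw [Real.sqrt_sq hs0.le]
  ring

lemma hasDerivAt_gAux {H : ℝ} (hH : 0 < H) :
    HasDerivAt gAux
      (8 * Real.pi * H * ((Real.sqrt (4 * H ^ 2 + 1)) ^ 5)⁻¹ *
        (8 * (1 - 2 * H ^ 2) *
          ((1/2) * (Real.log (Real.sqrt (4 * H ^ 2 + 1) + 1) -
                    Real.log (Real.sqrt (4 * H ^ 2 + 1) - 1))) -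
         12 * Real.sqrt (4 * H ^ 2 + 1))) H := by
  have hu : (1:ℝ) < 4 * H ^ 2 + 1 := by nlinarith
  set s := Real.sqrt (4 * H ^ 2 + 1) with hsdef
  have hs1 : 1 < s := by
    have := Real.sqrt_lt_sqrt (le_of_lt one_pos) hu
    simpa [hsdef] using this
  have hs0 : 0 < s := by linarith
  have hs2 : s ^ 2 = 4 * H ^ 2 + 1 := Real.sq_sqrt (by positivity)
  have hm0 : s - 1 > 0 := by linarith
  have hpoly : HasDerivAt (fun x : ℝ => 4 * x ^ 2 + 1) (8 * H) H := by
    have h := ((hasDerivAt_pow 2 H).const_mul 4).add_const 1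
    refine h.congr_deriv (Eq.symm ?_)
    simp; ring
  have hS : HasDerivAt (fun x : ℝ => Real.sqrt (4 * x ^ 2 + 1)) (4 * H / s) H := by
    have h := hpoly.sqrt (by positivity : (4 * H ^ 2 + 1) ≠ 0)
    convert h using 1
    rw [← hsdef]
    field_simp
    ring
  have h1 : HasDerivAt (fun y : ℝ => ((Real.sqrt (4 * y ^ 2 + 1)) ^ 2)⁻¹)
      (-(8 * H) / s ^ 4) H := by
    have h := (hS.pow 2).inv (pow_pos hs0 2).ne'
    refine h.congr_deriv (Eq.symm ?_)
    simp only [Pi.pow_apply]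
    rw [← hsdef]
    field_simp
    ring
  have hlog1 := (hS.add_const 1).log (by positivity : s + 1 ≠ 0)
  have hlog2 := (hS.sub_const 1).log hm0.ne'
  have hT : HasDerivAt (fun y : ℝ => (1/2 : ℝ) * (Real.log (Real.sqrt (4 * y ^ 2 + 1) + 1)
      - Real.log (Real.sqrt (4 * y ^ 2 + 1) - 1))) (-(1 / (s * H))) H := by
    have h := (hlog1.sub hlog2).const_mul (1/2 : ℝ)
    refine h.congr_deriv (Eq.symm ?_)
    rw [← hsdef]
    have hrel : s ^ 2 - 1 = 4 * H ^ 2 := by linarith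
    field_simp
    nlinarith [hrel, hs0, hH]
  have hq : HasDerivAt (fun x : ℝ => 4 * x ^ 2) (8 * H) H := by
    have h := (hasDerivAt_pow 2 H).const_mul 4
    refine h.congr_deriv (Eq.symm ?_)
    simp; ring
  have hc : HasDerivAt (fun y : ℝ => ((Real.sqrt (4 * y ^ 2 + 1)) ^ 3)⁻¹)
      (-(12 * H) / s ^ 5) H := by
    have h := (hS.pow 3).inv (pow_pos hs0 3).ne'
    refine h.congr_deriv (Eq.symm ?_)
    simp only [Pi.pow_apply]
    rw [← hsdef]
    field_simp
    ring
  have hprod := (hq.mul hc).mul hT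
  have hmess := (h1.add hprod).const_mul (8 * Real.pi)
  rw [← hsdef] at hmess
  refine hmess.congr_deriv (Eq.symm ?_)
  simp only [Pi.mul_apply]
  rw [← hsdef]
  have hrel : s ^ 2 - 1 = 4 * H ^ 2 := by linarith
  field_simp
  linear_combination (
    (Real.log (s + 1) - Real.log (s - 1)) * (-8)) * hrel

lemma deriv_pedrosa {H : ℝ} (hH : 0 < H) :
    deriv pedrosaArea H =
      8 * Real.pi * H * ((Real.sqrt (4 * H ^ 2 + 1)) ^ 5)⁻¹ *
        (8 * (1 - 2 * H ^ 2) *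
          ((1/2) * (Real.log (Real.sqrt (4 * H ^ 2 + 1) + 1) -
                    Real.log (Real.sqrt (4 * H ^ 2 + 1) - 1))) -
         12 * Real.sqrt (4 * H ^ 2 + 1)) := by
  have hev : pedrosaArea =ᶠ[nhds H] gAux := by
    filter_upwards [eventually_gt_nhds hH] with x hx
    exact pedrosa_eq_gAux hx
  rw [hev.deriv_eq]
  exact (hasDerivAt_gAux hH).deriv

/-- `A'(0.17) > 0` and `A'(0.19) < 0`. -/
theorem pedrosaArea_deriv_sign_at_endpoints :
    0 < deriv pedrosaArea 0.17 ∧ deriv pedrosaArea 0.19 < 0 := by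
  constructor
  · rw [deriv_pedrosa (by norm_num : (0:ℝ) < 0.17)]
    set s := Real.sqrt (4 * (0.17:ℝ) ^ 2 + 1) with hsdef
    have hs2 : s ^ 2 = 1.1156 := by
      rw [hsdef, Real.sq_sqrt (by norm_num)]; norm_num
    have hs0 : 0 ≤ s := Real.sqrt_nonneg _
    have hs1 : 1 < s := by nlinarith
    have hshi : s ≤ 1.0563 := by nlinarith
    have hlogdiv : Real.log (s + 1) - Real.log (s - 1) =
        Real.log ((s + 1) / (s - 1)) :=
      (Real.log_div (by linarith) (by linarith)).symm
    have hratio : (32:ℝ) ≤ (s + 1) / (s - 1) := by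
      rw [le_div_iff₀ (by linarith)]
      nlinarith
    have hlog32 : Real.log 32 ≤ Real.log ((s + 1) / (s - 1)) :=
      Real.log_le_log (by norm_num) hratio
    have h32 : Real.log 32 = 5 * Real.log 2 := by
      rw [show (32:ℝ) = 2 ^ 5 by norm_num, Real.log_pow]; push_cast; ring
    have hL : (3.4657359015:ℝ) ≤ Real.log (s + 1) - Real.log (s - 1) := by
      rw [hlogdiv]
      have := Real.log_two_gt_d9
      nlinarith
    apply mul_pos
    · have : (0:ℝ) < s := by linarith
      positivity
    · nlinarith
  · rw [deriv_pedrosa (by norm_num : (0:ℝ) < 0.19)]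
    set s := Real.sqrt (4 * (0.19:ℝ) ^ 2 + 1) with hsdef
    have hs2 : s ^ 2 = 1.1444 := by
      rw [hsdef, Real.sq_sqrt (by norm_num)]; norm_num
    have hs0 : 0 ≤ s := Real.sqrt_nonneg _
    have hs1 : 1 < s := by nlinarith
    have hslo : (1.0697:ℝ) ≤ s := by nlinarith
    have hlogdiv : Real.log (s + 1) - Real.log (s - 1) =
        Real.log ((s + 1) / (s - 1)) :=
      (Real.log_div (by linarith) (by linarith)).symm
    have hrpos : (0:ℝ) < (s + 1) / (s - 1) := by
      apply div_pos <;> linarith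
    have hratio : (s + 1) / (s - 1) ≤ 20698 / 697 := by
      rw [div_le_div_iff₀ (by linarith) (by norm_num)]
      nlinarith
    have h32 : Real.log 32 = 5 * Real.log 2 := by
      rw [show (32:ℝ) = 2 ^ 5 by norm_num, Real.log_pow]; push_cast; ring
    have hsplit : Real.log ((s + 1) / (s - 1)) =
        Real.log 32 + Real.log ((s + 1) / (s - 1) / 32) := by
      rw [← Real.log_mul (by norm_num) (by positivity)]
      congr 1
      ring
    have hsmall : Real.log ((s + 1) / (s - 1) / 32) ≤ (s + 1) / (s - 1) / 32 - 1 :=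
      Real.log_le_sub_one_of_pos (by positivity)
    have hL : Real.log (s + 1) - Real.log (s - 1) ≤ 3.39374 := by
      rw [hlogdiv, hsplit]
      have := Real.log_two_lt_d9
      nlinarith
    apply mul_neg_of_pos_of_neg
    · have : (0:ℝ) < s := by linarith
      positivity
    · nlinarith
end
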